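/- Let U and W be finite-dimensional complex vector spaces, α ∈ U and β ∈ W nonzero, and a, b ≥ 0. If ω₁ ∈ Λ^a U ⊗ Λ^{b+1} W and ω₂ ∈ Λ^{a+1} U ⊗ Λ^b W satisfy L_α ω₁ = L_β ω₂, then there exist η₁ ∈ Λ^{a−1} U ⊗ Λ^{b+1} W, η₂ ∈ Λ^a U ⊗ Λ^b W and η₃ ∈ Λ^{a+1} U ⊗ Λ^{b−1} W with ω₁ = L_α η₁ + L_β η₂ and ω₂ = L_α η₂ + L_β η₃. (Exactness of the symbol complex of the Schweitzer complex in the degree just below the Aeppli degree.) -/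

import Mathlib

open scoped TensorProduct

variable {U W : Type} [AddCommGroup U] [Module ℂ U] [AddCommGroup W] [Module ℂ W]

/-- Left wedge multiplication `L_α = α ∧ -` on exterior powers. -/
noncomputable def Lmul (α : U) (a : ℕ) : ⋀[ℂ]^a U →ₗ[ℂ] ⋀[ℂ]^(a + 1) U :=
  (LinearMap.mulLeft ℂ (ExteriorAlgebra.ι ℂ α)).restrict fun x hx => by
    have h1 : ExteriorAlgebra.ι ℂ α ∈ ⋀[ℂ]^1 U := by
      show ExteriorAlgebra.ι ℂ α ∈ LinearMap.range (ExteriorAlgebra.ι ℂ (M := U)) ^ 1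
      rw [pow_one]; exact LinearMap.mem_range_self _ α
    exact (Nat.add_comm 1 a) ▸ SetLike.mul_mem_graded h1 hx

lemma Lmul_Lmul (α : U) (a : ℕ) (x : ⋀[ℂ]^a U) :
    Lmul α (a + 1) (Lmul α a x) = 0 := by
  apply Subtype.ext
  show ExteriorAlgebra.ι ℂ α * (ExteriorAlgebra.ι ℂ α * (x : ExteriorAlgebra ℂ U)) = 0
  rw [← mul_assoc, ExteriorAlgebra.ι_sq_zero, zero_mul]

/-- `BX U W r s = Λ^r U ⊗ Λ^s W` for `r, s ≥ 0`, and the zero space otherwise. -/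
noncomputable def BX (U W : Type) [AddCommGroup U] [Module ℂ U] [AddCommGroup W] [Module ℂ W] :
    ℤ → ℤ → Type
  | Int.ofNat a, Int.ofNat b => ⋀[ℂ]^a U ⊗[ℂ] ⋀[ℂ]^b W
  | Int.ofNat _, Int.negSucc _ => PUnit
  | Int.negSucc _, _ => PUnit

noncomputable instance : ∀ r s, AddCommGroup (BX U W r s)
  | Int.ofNat a, Int.ofNat b => inferInstanceAs (AddCommGroup (⋀[ℂ]^a U ⊗[ℂ] ⋀[ℂ]^b W))
  | Int.ofNat _, Int.negSucc _ => inferInstanceAs (AddCommGroup PUnit)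
  | Int.negSucc _, Int.ofNat _ => inferInstanceAs (AddCommGroup PUnit)
  | Int.negSucc _, Int.negSucc _ => inferInstanceAs (AddCommGroup PUnit)

noncomputable instance : ∀ r s, Module ℂ (BX U W r s)
  | Int.ofNat a, Int.ofNat b => inferInstanceAs (Module ℂ (⋀[ℂ]^a U ⊗[ℂ] ⋀[ℂ]^b W))
  | Int.ofNat _, Int.negSucc _ => inferInstanceAs (Module ℂ PUnit)
  | Int.negSucc _, Int.ofNat _ => inferInstanceAs (Module ℂ PUnit)
  | Int.negSucc _, Int.negSucc _ => inferInstanceAs (Module ℂ PUnit)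

/-- The operator `L_α = (α ∧ -) ⊗ id` on `BX U W`. -/
noncomputable def Bd1 (α : U) : ∀ r s, BX U W r s →ₗ[ℂ] BX U W (r + 1) s
  | Int.ofNat a, Int.ofNat b => TensorProduct.map (Lmul α a) (LinearMap.id (M := ⋀[ℂ]^b W))
  | Int.ofNat _, Int.negSucc _ => 0
  | Int.negSucc _, _ => 0

/-- The operator `L_β = id ⊗ (β ∧ -)` on `BX U W`. -/
noncomputable def Bd2u (β : W) : ∀ r s, BX U W r s →ₗ[ℂ] BX U W r (s + 1)
  | Int.ofNat a, Int.ofNat b => TensorProduct.map (LinearMap.id (M := ⋀[ℂ]^a U)) (Lmul β b)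
  | Int.ofNat _, Int.negSucc _ => 0
  | Int.negSucc _, _ => 0

/-- The signed operator `(-1)^r L_β = (-1)^r (id ⊗ (β ∧ -))` on `BX U W`. -/
noncomputable def Bd2s (β : W) : ∀ r s, BX U W r s →ₗ[ℂ] BX U W r (s + 1)
  | Int.ofNat a, Int.ofNat b =>
      ((-1 : ℂ) ^ a) • TensorProduct.map (LinearMap.id (M := ⋀[ℂ]^a U)) (Lmul β b)
  | Int.ofNat _, Int.negSucc _ => 0
  | Int.negSucc _, _ => 0

/-- Transport of `BX` along equalities of the indices. -/
noncomputable def BXcast {r s r' s' : ℤ} (h1 : r = r') (h2 : s = s') :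
    BX U W r s ≃ₗ[ℂ] BX U W r' s' := by
  subst h1; subst h2; exact LinearEquiv.refl ℂ _

lemma iota_mem_one (α : U) : ExteriorAlgebra.ι ℂ α ∈ ⋀[ℂ]^1 U := by
  show ExteriorAlgebra.ι ℂ α ∈ LinearMap.range (ExteriorAlgebra.ι ℂ (M := U)) ^ 1
  rw [pow_one]; exact LinearMap.mem_range_self _ α

lemma contract_mem (φ : Module.Dual ℂ U) {n : ℕ} {x : ExteriorAlgebra ℂ U} (hx : x ∈ ⋀[ℂ]^n U) :
    CliffordAlgebra.contractLeft φ x ∈ ⋀[ℂ]^(n-1) U ∧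
      (n = 0 → CliffordAlgebra.contractLeft φ x = 0) := by
  refine Submodule.pow_induction_on_left'
    (M := LinearMap.range (ExteriorAlgebra.ι ℂ (M := U)))
    (C := fun n x _ => CliffordAlgebra.contractLeft φ x ∈ ⋀[ℂ]^(n-1) U ∧
      (n = 0 → CliffordAlgebra.contractLeft φ x = 0)) ?_ ?_ ?_ hx
  · intro r
    rw [CliffordAlgebra.contractLeft_algebraMap]
    exact ⟨Submodule.zero_mem _, fun _ => rfl⟩
  · rintro x y i hx hy ⟨ihx1, ihx2⟩ ⟨ihy1, ihy2⟩
    refine ⟨by rw [map_add]; exact Submodule.add_mem _ ihx1 ihy1, fun h => ?_⟩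
    rw [map_add, ihx2 h, ihy2 h, add_zero]
  · rintro m ⟨u, rfl⟩ i x hx ⟨ih1, ih2⟩
    rw [CliffordAlgebra.contractLeft_ι_mul]
    refine ⟨Submodule.sub_mem _ (Submodule.smul_mem _ _ hx) ?_, by simp⟩
    cases i with
    | zero => rw [ih2 rfl, mul_zero]; exact Submodule.zero_mem _
    | succ j =>
      exact (Nat.add_comm 1 j) ▸ SetLike.mul_mem_graded (iota_mem_one u) ih1

noncomputable def CmulP (φ : Module.Dual ℂ U) : ∀ m : ℕ, ⋀[ℂ]^m U →ₗ[ℂ] ⋀[ℂ]^(m-1) U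
  | 0 => 0
  | (_+1) => (CliffordAlgebra.contractLeft φ).restrict fun _ hx => (contract_mem φ hx).1

noncomputable def LmulP (α : U) : ∀ m : ℕ, ⋀[ℂ]^(m-1) U →ₗ[ℂ] ⋀[ℂ]^m U
  | 0 => 0
  | (k+1) => _root_.Lmul α k

noncomputable def CmulS (φ : Module.Dual ℂ U) (m : ℕ) : ⋀[ℂ]^(m+1) U →ₗ[ℂ] ⋀[ℂ]^m U :=
  CmulP φ (m+1)

lemma CmulP_val (φ : Module.Dual ℂ U) (m : ℕ) (x : ⋀[ℂ]^m U) :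
    (CmulP φ m x : ExteriorAlgebra ℂ U) = CliffordAlgebra.contractLeft φ (x : ExteriorAlgebra ℂ U) := by
  cases m with
  | zero => exact ((contract_mem φ x.2).2 rfl).symm
  | succ k => rfl

lemma homotU (α : U) (φ : Module.Dual ℂ U) (hφ : φ α = 1) (m : ℕ) :
    (LmulP α m).comp (CmulP φ m) + (CmulS φ m).comp (Lmul α m) = LinearMap.id := by
  apply LinearMap.ext
  intro x
  apply Subtype.ext
  have key : CliffordAlgebra.contractLeft φ (ExteriorAlgebra.ι ℂ α * (x : ExteriorAlgebra ℂ U))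
      = (x : ExteriorAlgebra ℂ U) - ExteriorAlgebra.ι ℂ α *
        CliffordAlgebra.contractLeft φ (x : ExteriorAlgebra ℂ U) := by
    rw [CliffordAlgebra.contractLeft_ι_mul, hφ, one_smul]
  cases m with
  | zero =>
    show (0 : ExteriorAlgebra ℂ U) + CliffordAlgebra.contractLeft φ
        (ExteriorAlgebra.ι ℂ α * (x : ExteriorAlgebra ℂ U)) = (x : ExteriorAlgebra ℂ U)
    rw [key, (contract_mem φ x.2).2 rfl, mul_zero, sub_zero, zero_add]
  | succ k =>
    show ExteriorAlgebra.ι ℂ α * CliffordAlgebra.contractLeft φ (x : ExteriorAlgebra ℂ U)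
        + CliffordAlgebra.contractLeft φ (ExteriorAlgebra.ι ℂ α * (x : ExteriorAlgebra ℂ U))
        = (x : ExteriorAlgebra ℂ U)
    rw [key]; abel

lemma LmulP_comp (α : U) (m : ℕ) : (Lmul α m).comp (LmulP α m) = 0 := by
  cases m with
  | zero => exact LinearMap.comp_zero _
  | succ k => exact LinearMap.ext fun x => Lmul_Lmul α k x

open TensorProduct in
lemma map_map_left {R M₁ M₂ M₃ N : Type*} [CommRing R] [AddCommGroup M₁] [Module R M₁]
    [AddCommGroup M₂] [Module R M₂] [AddCommGroup M₃] [Module R M₃]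
    [AddCommGroup N] [Module R N] (f : M₁ →ₗ[R] M₂) (g : M₂ →ₗ[R] M₃) (x : M₁ ⊗[R] N) :
    map g LinearMap.id (map f LinearMap.id x) = map (g.comp f) LinearMap.id x := by
  rw [← LinearMap.comp_apply, ← TensorProduct.map_comp, LinearMap.id_comp]

open TensorProduct in
lemma map_map_right {R M N₁ N₂ N₃ : Type*} [CommRing R] [AddCommGroup N₁] [Module R N₁]
    [AddCommGroup N₂] [Module R N₂] [AddCommGroup N₃] [Module R N₃]
    [AddCommGroup M] [Module R M] (f : N₁ →ₗ[R] N₂) (g : N₂ →ₗ[R] N₃) (x : M ⊗[R] N₁) :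
    map LinearMap.id g (map LinearMap.id f x) = map LinearMap.id (g.comp f) x := by
  rw [← LinearMap.comp_apply, ← TensorProduct.map_comp, LinearMap.id_comp]

open TensorProduct in
lemma map_comm' {R M₁ M₂ N₁ N₂ : Type*} [CommRing R] [AddCommGroup M₁] [Module R M₁]
    [AddCommGroup M₂] [Module R M₂] [AddCommGroup N₁] [Module R N₁]
    [AddCommGroup N₂] [Module R N₂] (f : M₁ →ₗ[R] M₂) (g : N₁ →ₗ[R] N₂) (x : M₁ ⊗[R] N₁) :
    map f LinearMap.id (map LinearMap.id g x) = map LinearMap.id g (map f LinearMap.id x) := by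
  rw [← LinearMap.comp_apply, ← TensorProduct.map_comp, ← LinearMap.comp_apply,
    ← TensorProduct.map_comp, LinearMap.id_comp, LinearMap.id_comp, LinearMap.comp_id,
    LinearMap.comp_id]

set_option maxHeartbeats 1000000 in
set_option synthInstance.maxHeartbeats 200000 in
open TensorProduct in
lemma key (α : U) (β : W) (φ : Module.Dual ℂ U) (ψ : Module.Dual ℂ W)
    (hφ : φ α = 1) (hψ : ψ β = 1) (m n : ℕ)
    (ω₁ : ⋀[ℂ]^m U ⊗[ℂ] ⋀[ℂ]^(n+1) W) (ω₂ : ⋀[ℂ]^(m+1) U ⊗[ℂ] ⋀[ℂ]^n W)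
    (h : map (Lmul α m) LinearMap.id ω₁ = map LinearMap.id (Lmul β n) ω₂) :
    ∃ (η₁ : ⋀[ℂ]^(m-1) U ⊗[ℂ] ⋀[ℂ]^(n+1) W) (η₂ : ⋀[ℂ]^m U ⊗[ℂ] ⋀[ℂ]^n W)
      (η₃ : ⋀[ℂ]^(m+1) U ⊗[ℂ] ⋀[ℂ]^(n-1) W),
      ω₁ = map (LmulP α m) LinearMap.id η₁ + map LinearMap.id (Lmul β n) η₂ ∧
      ω₂ = map (Lmul α m) LinearMap.id η₂ + map LinearMap.id (LmulP β n) η₃ := by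
  have hU0 : map ((LmulP α m).comp (CmulP φ m) + (CmulS φ m).comp (Lmul α m))
      (LinearMap.id (M := ⋀[ℂ]^(n+1) W)) ω₁ = ω₁ := by
    rw [homotU α φ hφ m, TensorProduct.map_id, LinearMap.id_apply]
  rw [TensorProduct.map_add_left, LinearMap.add_apply] at hU0
  have e1 : ω₁ = map (LmulP α m) LinearMap.id (map (CmulP φ m) LinearMap.id ω₁)
      + map LinearMap.id (Lmul β n) (map (CmulS φ m) LinearMap.id ω₂) := by
    rw [map_map_left, ← map_comm' (CmulS φ m) (Lmul β n) ω₂, ← h,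
      map_map_left, hU0]
  have h2 := congrArg (map (Lmul α m) (LinearMap.id (M := ⋀[ℂ]^(n+1) W))) hU0
  rw [map_add, map_map_left, map_map_left, ← LinearMap.comp_assoc, LmulP_comp,
    LinearMap.zero_comp, TensorProduct.map_zero_left, LinearMap.zero_apply, zero_add] at h2
  have hz0 : map LinearMap.id (Lmul β n) (ω₂
      - map (Lmul α m) LinearMap.id (map (CmulS φ m) LinearMap.id ω₂)) = 0 := by
    rw [map_sub, ← h, ← map_comm', ← map_comm', ← h, map_map_left, map_map_left, LinearMap.comp_assoc, h2, sub_self]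
  set z := ω₂ - map (Lmul α m) LinearMap.id (map (CmulS φ m) LinearMap.id ω₂) with hzdef
  have hW0 : map (LinearMap.id (M := ⋀[ℂ]^(m+1) U))
      ((LmulP β n).comp (CmulP ψ n) + (CmulS ψ n).comp (Lmul β n)) z = z := by
    rw [homotU β ψ hψ n, TensorProduct.map_id, LinearMap.id_apply]
  rw [TensorProduct.map_add_right, LinearMap.add_apply] at hW0
  have t2 : map LinearMap.id ((CmulS ψ n).comp (Lmul β n)) z = 0 := by
    rw [← map_map_right, hz0, LinearMap.map_zero]
  rw [t2, add_zero, ← map_map_right] at hW0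
  refine ⟨map (CmulP φ m) LinearMap.id ω₁, map (CmulS φ m) LinearMap.id ω₂,
    map LinearMap.id (CmulP ψ n) z, e1, ?_⟩
  rw [hW0, hzdef]
  abel

lemma exists_dual_one {V : Type} [AddCommGroup V] [Module ℂ V] {v : V} (hv : v ≠ 0) :
    ∃ φ : Module.Dual ℂ V, φ v = 1 := by
  have hker : LinearMap.ker (LinearMap.toSpanSingleton ℂ V v) = ⊥ :=
    LinearMap.ker_toSpanSingleton (R := ℂ) hv
  obtain ⟨g, hg⟩ := LinearMap.exists_leftInverse_of_injective (LinearMap.toSpanSingleton ℂ V v) hker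
  refine ⟨g, ?_⟩
  have := congrArg (fun f : ℂ →ₗ[ℂ] ℂ => f 1) hg
  simpa [LinearMap.toSpanSingleton_apply_one] using this

lemma Bd1_cast (α : U) {r r' s : ℤ} (h : r = r') (x : BX U W r s) :
    Bd1 α r' s (BXcast h rfl x) = BXcast (by rw [h]) rfl (Bd1 α r s x) := by
  subst h; rfl

lemma Bd2u_cast (β : W) {r s s' : ℤ} (h : s = s') (x : BX U W r s) :
    Bd2u β r s' (BXcast rfl h x) = BXcast rfl (by rw [h]) (Bd2u β r s x) := by
  subst h; rfl

lemma BXcast_trans1 {r r' r'' s : ℤ} (h1 : r = r') (h2 : r' = r'') (x : BX U W r s) :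
    BXcast h2 rfl (BXcast h1 rfl x) = BXcast (h1.trans h2) rfl x := by
  subst h1; subst h2; rfl

lemma BXcast_trans2 {r s s' s'' : ℤ} (h1 : s = s') (h2 : s' = s'') (x : BX U W r s) :
    BXcast rfl h2 (BXcast rfl h1 x) = BXcast rfl (h1.trans h2) x := by
  subst h1; subst h2; rfl


set_option maxHeartbeats 1000000 in
/-- Exactness of the symbol complex of the Schweitzer complex in the degree just below
the Aeppli degree: if `ω₁ ∈ Λ^a U ⊗ Λ^{b+1} W` and `ω₂ ∈ Λ^{a+1} U ⊗ Λ^b W` satisfy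
`L_α ω₁ = L_β ω₂` (for `α, β` nonzero), then there are `η₁ ∈ Λ^{a-1} U ⊗ Λ^{b+1} W`,
`η₂ ∈ Λ^a U ⊗ Λ^b W` and `η₃ ∈ Λ^{a+1} U ⊗ Λ^{b-1} W` with `ω₁ = L_α η₁ + L_β η₂`
and `ω₂ = L_α η₂ + L_β η₃`. -/
theorem symbol_exact_below_aeppli (U W : Type) [AddCommGroup U] [Module ℂ U]
    [AddCommGroup W] [Module ℂ W] [FiniteDimensional ℂ U] [FiniteDimensional ℂ W]
    (α : U) (β : W) (hα : α ≠ 0) (hβ : β ≠ 0) (a b : ℤ) (ha : 0 ≤ a) (hb : 0 ≤ b)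
    (ω₁ : BX U W a (b + 1)) (ω₂ : BX U W (a + 1) b)
    (h : Bd1 α a (b + 1) ω₁ = Bd2u β (a + 1) b ω₂) :
    ∃ (η₁ : BX U W (a - 1) (b + 1)) (η₂ : BX U W a b) (η₃ : BX U W (a + 1) (b - 1)),
      ω₁ = BXcast (show a - 1 + 1 = a by omega) rfl (Bd1 α (a - 1) (b + 1) η₁)
            + Bd2u β a b η₂ ∧
      ω₂ = Bd1 α a b η₂
            + BXcast rfl (show b - 1 + 1 = b by omega) (Bd2u β (a + 1) (b - 1) η₃) := by
  obtain ⟨φ, hφ⟩ := exists_dual_one hα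
  obtain ⟨ψ, hψ⟩ := exists_dual_one hβ
  obtain ⟨m, rfl⟩ := Int.eq_ofNat_of_zero_le ha
  obtain ⟨n, rfl⟩ := Int.eq_ofNat_of_zero_le hb
  have hkey := key α β φ ψ hφ hψ m n ω₁ ω₂ h
  obtain ⟨η₁', η₂', η₃', He1, He2⟩ := hkey
  rcases m with _ | k <;> rcases n with _ | l
  · rw [show LmulP α 0 = (0 : (⋀[ℂ]^0 U) →ₗ[ℂ] ⋀[ℂ]^0 U) from rfl,
      TensorProduct.map_zero_left, LinearMap.zero_apply] at He1
    rw [show LmulP β 0 = (0 : (⋀[ℂ]^0 W) →ₗ[ℂ] ⋀[ℂ]^0 W) from rfl,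
      TensorProduct.map_zero_right, LinearMap.zero_apply] at He2
    exact ⟨PUnit.unit, η₂', PUnit.unit, He1, He2⟩
  · rw [show LmulP α 0 = (0 : (⋀[ℂ]^0 U) →ₗ[ℂ] ⋀[ℂ]^0 U) from rfl,
      TensorProduct.map_zero_left, LinearMap.zero_apply] at He1
    have e : ((l : ℤ)) = (↑(l + 1) : ℤ) - 1 := by omega
    refine ⟨PUnit.unit, η₂', BXcast rfl e η₃', He1, ?_⟩
    erw [Bd2u_cast β e, BXcast_trans2]
    exact He2
  · have e : ((k : ℤ)) = (↑(k + 1) : ℤ) - 1 := by omega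
    rw [show LmulP β 0 = (0 : (⋀[ℂ]^0 W) →ₗ[ℂ] ⋀[ℂ]^0 W) from rfl,
      TensorProduct.map_zero_right, LinearMap.zero_apply] at He2
    refine ⟨BXcast e rfl η₁', η₂', PUnit.unit, ?_, He2⟩
    erw [Bd1_cast α e, BXcast_trans1]
    exact He1
  · have e : ((k : ℤ)) = (↑(k + 1) : ℤ) - 1 := by omega
    have e' : ((l : ℤ)) = (↑(l + 1) : ℤ) - 1 := by omega
    refine ⟨BXcast e rfl η₁', η₂', BXcast rfl e' η₃', ?_, ?_⟩
    · erw [Bd1_cast α e, BXcast_trans1]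
      exact He1
    · erw [Bd2u_cast β e', BXcast_trans2]
      exact He2
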